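/- The error bound of Babai's nearest plane algorithm is tight: for linearly independent a₁,…,a_c with Gram–Schmidt vectors ã₁,…,ã_c, there exists a target y (namely a corner of the fundamental hyper-cuboid, y = (1/2)Σⱼ ãⱼ) such that the closest point of the form A z with z the Babai output satisfies ‖A z − y‖² = (1/4) Σⱼ ‖ãⱼ‖². -/

import Mathlib

open Matrix
open scoped RealInnerProductSpace

/-- Gram–Schmidt orthogonalization of a finite family (the unnormalized
Gram–Schmidt vectors `ãⱼ = aⱼ − Σ_{k<j} (⟪ã_k,aⱼ⟫/‖ã_k‖²) ã_k`). -/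
noncomputable def gramSchmidtFin {n c : ℕ} (a : Fin c → EuclideanSpace ℝ (Fin n)) :
    Fin c → EuclideanSpace ℝ (Fin n) :=
  letI : WellFoundedLT (Fin c) := inferInstance
  InnerProductSpace.gramSchmidt ℝ a


/-- Rounding to the nearest integer, with ties broken consistently downwards
(so that `roundHalfDown (1/2) = 0`, giving rounding error exactly `1/2`). -/
noncomputable def roundHalfDown (x : ℝ) : ℤ := ⌈x - 1 / 2⌉

/-- The residual vector of Babai's nearest plane algorithm after `k` steps
(processing dimensions back-to-front: step `k+1` handles index `c-(k+1)`),
with consistent tie-breaking at halfway points. -/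
noncomputable def babaiRes {n c : ℕ} (a gs : Fin c → EuclideanSpace ℝ (Fin n))
    (y : EuclideanSpace ℝ (Fin n)) : ℕ → EuclideanSpace ℝ (Fin n)
  | 0 => y
  | (k+1) =>
      if h : c - (k+1) < c then
        let i : Fin c := ⟨c - (k+1), h⟩
        let r := babaiRes a gs y k
        r - ((roundHalfDown (⟪gs i, r⟫ / ⟪gs i, a i⟫) : ℤ) : ℝ) • a i
      else babaiRes a gs y k

/-- The integer coefficients output by Babai's nearest plane algorithm. -/
noncomputable def babaiZ {n c : ℕ} (a gs : Fin c → EuclideanSpace ℝ (Fin n))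
    (y : EuclideanSpace ℝ (Fin n)) (j : Fin c) : ℤ :=
  roundHalfDown (⟪gs j, babaiRes a gs y (c - 1 - (j : ℕ))⟫ / ⟪gs j, a j⟫)

lemma inner_gs_a {n c : ℕ} (a : Fin c → EuclideanSpace ℝ (Fin n)) (i : Fin c) :
    ⟪gramSchmidtFin a i, a i⟫ = ‖gramSchmidtFin a i‖ ^ 2 := by
  haveI : WellFoundedLT (Fin c) := inferInstance
  have h := InnerProductSpace.gramSchmidt_def'' ℝ a i
  unfold gramSchmidtFin
  rw [h, inner_add_right, inner_sum]
  rw [Finset.sum_eq_zero, add_zero, real_inner_self_eq_norm_sq]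
  intro j hj
  rw [real_inner_smul_right, InnerProductSpace.gramSchmidt_orthogonal ℝ a (Finset.mem_Iio.mp hj).ne', mul_zero]

lemma inner_gs_y {n c : ℕ} (a : Fin c → EuclideanSpace ℝ (Fin n)) (i : Fin c) :
    ⟪gramSchmidtFin a i, (1 / 2 : ℝ) • ∑ j, gramSchmidtFin a j⟫
      = (1 / 2) * ‖gramSchmidtFin a i‖ ^ 2 := by
  haveI : WellFoundedLT (Fin c) := inferInstance
  rw [real_inner_smul_right, inner_sum]
  congr 1
  rw [Finset.sum_eq_single i]
  · exact real_inner_self_eq_norm_sq _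
  · intro j _ hj
    exact InnerProductSpace.gramSchmidt_orthogonal ℝ a (Ne.symm hj)
  · simp

lemma roundHalfDown_half : roundHalfDown (1 / 2) = 0 := by
  unfold roundHalfDown; norm_num

/-- Babai's error bound is tight: for the corner target
`y = (1/2) Σⱼ gsⱼ` of the fundamental hyper-cuboid, the Babai output `z` satisfies
`‖A z − y‖² = (1/4) Σⱼ ‖gsⱼ‖²`. -/
theorem babai_error_bound_tight {n c : ℕ} (a : Fin c → EuclideanSpace ℝ (Fin n))
    (ha : LinearIndependent ℝ a)
    (y : EuclideanSpace ℝ (Fin n)) (hy : y = (1 / 2 : ℝ) • ∑ j, gramSchmidtFin a j) :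
    ‖(∑ j, (babaiZ a (gramSchmidtFin a) y j : ℝ) • a j) - y‖ ^ 2
      = (1 / 4) * ∑ j, ‖gramSchmidtFin a j‖ ^ 2 := by
  haveI : WellFoundedLT (Fin c) := inferInstance
  have hgs : ∀ i : Fin c, gramSchmidtFin a i ≠ 0 := fun i =>
    InnerProductSpace.gramSchmidt_ne_zero i ha
  have hratio : ∀ i : Fin c,
      ⟪gramSchmidtFin a i, y⟫ / ⟪gramSchmidtFin a i, a i⟫ = 1 / 2 := by
    intro i
    rw [hy, inner_gs_y, inner_gs_a, mul_div_assoc, div_self, mul_one]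
    exact pow_ne_zero 2 (norm_ne_zero_iff.mpr (hgs i))
  have hres : ∀ k, babaiRes a (gramSchmidtFin a) y k = y := by
    intro k
    induction k with
    | zero => rfl
    | succ k ih =>
      unfold babaiRes
      split
      · simp only [ih, hratio, roundHalfDown_half, Int.cast_zero, zero_smul, sub_zero]
      · exact ih
  have hz : ∀ j : Fin c, babaiZ a (gramSchmidtFin a) y j = 0 := by
    intro j
    unfold babaiZ
    rw [hres, hratio, roundHalfDown_half]
  rw [Finset.sum_eq_zero (fun j _ => by rw [hz j, Int.cast_zero, zero_smul]),
    zero_sub, norm_neg, hy, norm_smul]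
  rw [mul_pow]
  have : ‖∑ j, gramSchmidtFin a j‖ ^ 2 = ∑ j, ‖gramSchmidtFin a j‖ ^ 2 := by
    rw [← real_inner_self_eq_norm_sq, sum_inner]
    refine Finset.sum_congr rfl fun i _ => ?_
    rw [inner_sum, Finset.sum_eq_single i]
    · exact real_inner_self_eq_norm_sq _
    · intro j _ hj; exact InnerProductSpace.gramSchmidt_orthogonal ℝ a (Ne.symm hj)
    · simp
  rw [this]
  norm_num
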